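/- Let p be an odd prime and D_{2p} = ⟨a, b⟩ the dihedral group of order 2p. The intersection of D_{2p} (embedded in the unit group of F_2 D_{2p}) with the subgroup B generated by all bicyclic units equals ⟨a⟩, the cyclic subgroup of order p. -/

import Mathlib

open MonoidAlgebra

/-- The subgroup of the unit group of `F₂ D₂ₚ` generated by the bicyclic units
`u_{g,h} = 1 + (g - 1) h ĝ`. -/
noncomputable def bicyclicGroup (p : ℕ) :
    Subgroup (MonoidAlgebra (ZMod 2) (DihedralGroup p))ˣ :=
  Subgroup.closure {u | ∃ g h : DihedralGroup p,
    (u : MonoidAlgebra (ZMod 2) (DihedralGroup p)) =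
      1 + (MonoidAlgebra.of (ZMod 2) (DihedralGroup p) g - 1) *
        MonoidAlgebra.of (ZMod 2) (DihedralGroup p) h *
        ∑ i ∈ Finset.range (orderOf g), MonoidAlgebra.of (ZMod 2) (DihedralGroup p) (g ^ i)}

open DihedralGroup Finset

namespace S15
variable (p : ℕ)

noncomputable abbrev rh (z : ℤ) : MonoidAlgebra (ZMod 2) (DihedralGroup p) :=
  MonoidAlgebra.of (ZMod 2) (DihedralGroup p) (r (z : ZMod p))
noncomputable abbrev sh (z : ℤ) : MonoidAlgebra (ZMod 2) (DihedralGroup p) :=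
  MonoidAlgebra.of (ZMod 2) (DihedralGroup p) (sr (z : ZMod p))

variable {p}

lemma rh_mul_rh (a b : ℤ) : rh p a * rh p b = rh p (a + b) := by
  rw [← map_mul, r_mul_r]; norm_cast
lemma rh_mul_sh (a b : ℤ) : rh p a * sh p b = sh p (b - a) := by
  rw [← map_mul, r_mul_sr]; norm_cast
lemma sh_mul_rh (a b : ℤ) : sh p a * rh p b = sh p (a + b) := by
  rw [← map_mul, sr_mul_r]; norm_cast
lemma sh_mul_sh (a b : ℤ) : sh p a * sh p b = rh p (b - a) := by
  rw [← map_mul, sr_mul_sr]; norm_cast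
lemma rh_zero : rh p 0 = 1 := by
  show MonoidAlgebra.of _ _ _ = _
  rw [show (r ((0:ℤ) : ZMod p) : DihedralGroup p) = 1 by rw [one_def]; norm_num, map_one]

lemma add_self (x : MonoidAlgebra (ZMod 2) (DihedralGroup p)) : x + x = 0 := by
  have : x + x = ((1 : ZMod 2) + 1) • x := by rw [add_smul, one_smul]
  rw [this, show ((1 : ZMod 2) + 1) = 0 from by decide, zero_smul]

lemma neg_self (x : MonoidAlgebra (ZMod 2) (DihedralGroup p)) : -x = x := by
  rw [neg_eq_iff_add_eq_zero, add_self]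

lemma smul2 (x : MonoidAlgebra (ZMod 2) (DihedralGroup p)) : (2:ℕ) • x = 0 := by
  rw [two_smul, add_self]
lemma smul2z (x : MonoidAlgebra (ZMod 2) (DihedralGroup p)) : (2:ℤ) • x = 0 := by
  rw [two_smul, add_self]
lemma smul3z (x : MonoidAlgebra (ZMod 2) (DihedralGroup p)) : (3:ℤ) • x = x := by
  rw [show (3:ℤ) = 2 + 1 from rfl, add_smul, smul2z, one_smul, zero_add]
lemma smul3 (x : MonoidAlgebra (ZMod 2) (DihedralGroup p)) : (3:ℕ) • x = x := by
  rw [show (3:ℕ) = 2 + 1 from rfl, add_smul, smul2, one_smul, zero_add]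

variable (p)
noncomputable def RS (a b : ℤ) : MonoidAlgebra (ZMod 2) (DihedralGroup p) :=
  ∑ j ∈ Ioc a b, rh p j
noncomputable def SSm (a b : ℤ) : MonoidAlgebra (ZMod 2) (DihedralGroup p) :=
  ∑ j ∈ Ioc a b, sh p j
variable {p}

lemma sum_Ioc_shift {M : Type*} [AddCommMonoid M] (f : ℤ → M) (a b c : ℤ) :
    ∑ j ∈ Ioc a b, f (j + c) = ∑ j ∈ Ioc (a + c) (b + c), f j := by
  rw [← Finset.map_add_right_Ioc, Finset.sum_map]
  simp

lemma sum_Ioc_reflect {M : Type*} [AddCommMonoid M] (f : ℤ → M) (a b c : ℤ) :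
    ∑ j ∈ Ioc a b, f (c - j) = ∑ j ∈ Ioc (c - b - 1) (c - a - 1), f j := by
  have h : Ioc (c - b - 1) (c - a - 1) = (Ioc a b).map ⟨fun x => c - x, fun x y h => by simp only at h; omega⟩ := by
    ext x
    simp only [Finset.mem_map, Finset.mem_Ioc, Function.Embedding.coeFn_mk]
    constructor
    · intro hx; exact ⟨c - x, by omega, by show c - (c - x) = x; omega⟩
    · rintro ⟨y, hy, rfl⟩; show c - b - 1 < c - y ∧ c - y ≤ c - a - 1; omega
  rw [h, Finset.sum_map]
  rfl

lemma RS_mul_rh (a b c : ℤ) : RS p a b * rh p c = RS p (a + c) (b + c) := by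
  rw [RS, RS, Finset.sum_mul]
  simp_rw [rh_mul_rh]
  exact sum_Ioc_shift _ a b c

lemma RS_mul_sh (a b c : ℤ) : RS p a b * sh p c = SSm p (c - b - 1) (c - a - 1) := by
  rw [RS, SSm, Finset.sum_mul]
  simp_rw [rh_mul_sh]
  exact sum_Ioc_reflect _ a b c

lemma SS_mul_rh (a b c : ℤ) : SSm p a b * rh p c = SSm p (a + c) (b + c) := by
  rw [SSm, SSm, Finset.sum_mul]
  simp_rw [sh_mul_rh]
  exact sum_Ioc_shift _ a b c

lemma SS_mul_sh (a b c : ℤ) : SSm p a b * sh p c = RS p (c - b - 1) (c - a - 1) := by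
  rw [SSm, RS, Finset.sum_mul]
  simp_rw [sh_mul_sh]
  exact sum_Ioc_reflect _ a b c

lemma RS_split (a b c : ℤ) (h1 : a ≤ b) (h2 : b ≤ c) : RS p a c = RS p a b + RS p b c := by
  rw [RS, RS, RS, ← Finset.sum_union (Finset.disjoint_left.2 fun x hx hx' => by
      simp only [Finset.mem_Ioc] at hx hx'; omega),
    Finset.Ioc_union_Ioc_eq_Ioc h1 h2]

lemma SS_split (a b c : ℤ) (h1 : a ≤ b) (h2 : b ≤ c) : SSm p a c = SSm p a b + SSm p b c := by
  rw [SSm, SSm, SSm, ← Finset.sum_union (Finset.disjoint_left.2 fun x hx hx' => by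
      simp only [Finset.mem_Ioc] at hx hx'; omega),
    Finset.Ioc_union_Ioc_eq_Ioc h1 h2]

lemma RS_single (a : ℤ) : RS p (a - 1) a = rh p a := by
  rw [RS, show Ioc (a-1) a = {a} from by ext x; simp [Finset.mem_Ioc]; omega, Finset.sum_singleton]

lemma SS_single (a : ℤ) : SSm p (a - 1) a = sh p a := by
  rw [SSm, show Ioc (a-1) a = {a} from by ext x; simp [Finset.mem_Ioc]; omega, Finset.sum_singleton]

lemma RS_single' (a b : ℤ) (h : a = b - 1) : RS p a b = rh p b := by
  rw [h, RS_single]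
lemma SS_single' (a b : ℤ) (h : a = b - 1) : SSm p a b = sh p b := by
  rw [h, SS_single]

lemma RS_empty (a : ℤ) : RS p a a = 0 := by rw [RS, Finset.Ioc_self, Finset.sum_empty]
lemma SS_empty (a : ℤ) : SSm p a a = 0 := by rw [SSm, Finset.Ioc_self, Finset.sum_empty]


variable (p)
noncomputable def AA (M : ℤ) : MonoidAlgebra (ZMod 2) (DihedralGroup p) :=
  RS p (-M-1) M + SSm p (-1) (M-1) + SSm p (-M-2) (-2)
noncomputable def EE (M : ℤ) : MonoidAlgebra (ZMod 2) (DihedralGroup p) :=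
  RS p (-M) (M+1) + SSm p (-1) (M-1) + SSm p (-M-2) (-2)
noncomputable def uab (k : ℤ) : MonoidAlgebra (ZMod 2) (DihedralGroup p) :=
  1 + rh p k + rh p (-k) + sh p (k-1) + sh p (-1-k)
noncomputable def ub (k : ℤ) : MonoidAlgebra (ZMod 2) (DihedralGroup p) :=
  1 + rh p k + rh p (-k) + sh p k + sh p (-k)
variable {p}

lemma recA (M : ℤ) (hM : 0 ≤ M) : AA p M * uab p (M+1) = AA p (M+1) := by
  rw [AA, uab, AA]
  simp only [mul_add, add_mul, mul_one, RS_mul_rh, RS_mul_sh, SS_mul_rh, SS_mul_sh]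
  ring_nf
  rw [show RS p (-1-M) M = RS p (-1-M) (-1) + RS p (-1) 0 + RS p 0 M from by
      rw [RS_split (-1-M) (-1) M (by omega) (by omega), RS_split (-1) 0 M (by omega) (by omega)]; abel,
    show RS p 0 (1+M*2) = RS p 0 M + RS p M (1+M) + RS p (1+M) (1+M*2) from by
      rw [RS_split 0 M (1+M*2) (by omega) (by omega), RS_split M (1+M) (1+M*2) (by omega) (by omega)]; abel,
    show RS p (-2-M*2) (-1) = RS p (-2-M*2) (-2-M) + RS p (-2-M) (-1-M) + RS p (-1-M) (-1) from by
      rw [RS_split (-2-M*2) (-2-M) (-1) (by omega) (by omega), RS_split (-2-M) (-1-M) (-1) (by omega) (by omega)]; abel,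
    show RS p (-2-M) (1+M) = RS p (-2-M) (-1-M) + RS p (-1-M) (-1) + RS p (-1) 0 + RS p 0 M + RS p M (1+M) from by
      rw [RS_split (-2-M) (-1-M) (1+M) (by omega) (by omega), RS_split (-1-M) (-1) (1+M) (by omega) (by omega),
        RS_split (-1) 0 (1+M) (by omega) (by omega), RS_split 0 M (1+M) (by omega) (by omega)]; abel,
    show SSm p (-1) (M*2) = SSm p (-1) M + SSm p M (M*2) from
      SS_split (-1) M (M*2) (by omega) (by omega),
    show SSm p (-3-M*2) (-2) = SSm p (-3-M*2) (-3-M) + SSm p (-3-M) (-2) from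
      SS_split (-3-M*2) (-3-M) (-2) (by omega) (by omega)]
  abel_nf
  simp only [smul2z, smul3z]
  abel


lemma recE (M : ℤ) (hM : 0 ≤ M) : EE p M * ub p (M+1) = EE p (M+1) := by
  rw [EE, ub, EE]
  simp only [mul_add, add_mul, mul_one, RS_mul_rh, RS_mul_sh, SS_mul_rh, SS_mul_sh]
  ring_nf
  rw [show RS p 1 (2+M*2) = RS p 1 (1+M) + RS p (1+M) (2+M) + RS p (2+M) (2+M*2) from by
      rw [RS_split 1 (1+M) (2+M*2) (by omega) (by omega), RS_split (1+M) (2+M) (2+M*2) (by omega) (by omega)]; abel,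
    show RS p (-1-M*2) 0 = RS p (-1-M*2) (-1-M) + RS p (-1-M) (-M) + RS p (-M) 0 from by
      rw [RS_split (-1-M*2) (-1-M) 0 (by omega) (by omega), RS_split (-1-M) (-M) 0 (by omega) (by omega)]; abel,
    show RS p (-1-M) (2+M) = RS p (-1-M) (-M) + RS p (-M) (1+M) + RS p (1+M) (2+M) from by
      rw [RS_split (-1-M) (-M) (2+M) (by omega) (by omega), RS_split (-M) (1+M) (2+M) (by omega) (by omega)]; abel,
    show SSm p (-1) (M*2) = SSm p (-1) M + SSm p M (M*2) from
      SS_split (-1) M (M*2) (by omega) (by omega),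
    show SSm p (-3-M*2) (-2) = SSm p (-3-M*2) (-3-M) + SSm p (-3-M) (-2) from
      SS_split (-3-M*2) (-3-M) (-2) (by omega) (by omega)]
  abel_nf
  simp only [smul2z, smul3z]
  abel


lemma AA_zero : AA p 0 = 1 := by
  rw [AA, show ((0:ℤ)-1) = (-1:ℤ) from by norm_num, SS_empty,
    show (-(0:ℤ)-2) = (-2:ℤ) from by norm_num, SS_empty,
    RS_single' _ _ (by norm_num), rh_zero]
  abel

lemma EE_zero : EE p 0 = rh p 1 := by
  rw [EE, show ((0:ℤ)-1) = (-1:ℤ) from by norm_num, SS_empty,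
    show (-(0:ℤ)-2) = (-2:ℤ) from by norm_num, SS_empty,
    RS_single' _ _ (by norm_num)]
  norm_num

lemma prodA (m : ℕ) :
    ((List.range m).map (fun k : ℕ => uab p ((k:ℤ)+1))).prod = AA p m := by
  induction m with
  | zero => rw [List.range_zero, List.map_nil, List.prod_nil]; exact AA_zero.symm
  | succ n ih =>
    rw [List.range_succ, List.map_append, List.prod_append, List.map_singleton,
      List.prod_singleton, ih, show ((n:ℤ)+1) = (n:ℤ)+1 from rfl,
      recA (n:ℤ) (Int.natCast_nonneg n)]
    push_cast
    ring_nf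

lemma prodE (m : ℕ) :
    rh p 1 * ((List.range m).map (fun k : ℕ => ub p ((k:ℤ)+1))).prod = EE p m := by
  induction m with
  | zero => rw [List.range_zero, List.map_nil, List.prod_nil, mul_one]; exact EE_zero.symm
  | succ n ih =>
    rw [List.range_succ, List.map_append, List.prod_append, List.map_singleton,
      List.prod_singleton, ← mul_assoc, ih, recE (n:ℤ) (Int.natCast_nonneg n)]
    push_cast
    ring_nf

lemma rh_congr {a b : ℤ} (h : (a : ZMod p) = (b : ZMod p)) : rh p a = rh p b := by
  rw [rh, rh, h]

lemma AEeq {l : ℕ} (hpl : p = 2*l+1) : AA p (l:ℤ) = EE p (l:ℤ) := by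
  have hcast : rh p (-(l:ℤ)) = rh p ((l:ℤ)+1) := by
    apply rh_congr
    have h0 : (((p:ℕ):ℤ) : ZMod p) = 0 := by push_cast [ZMod.natCast_self]; ring
    rw [show ((l:ℤ)+1) = -(l:ℤ) + ((p:ℕ):ℤ) from by rw [hpl]; push_cast; ring,
      Int.cast_add, h0, add_zero]
  rw [AA, EE,
    RS_split (-(l:ℤ)-1) (-(l:ℤ)) (l:ℤ) (by omega) (by omega),
    RS_split (-(l:ℤ)) (l:ℤ) ((l:ℤ)+1) (by omega) (by omega),
    RS_single' (-(l:ℤ)-1) (-(l:ℤ)) (by ring),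
    RS_single' (l:ℤ) ((l:ℤ)+1) (by ring), hcast]
  abel


-- value of the generic bicyclic-unit expression for a reflection
lemma gen_expr (c : ZMod p) (h : DihedralGroup p) :
    1 + (MonoidAlgebra.of (ZMod 2) (DihedralGroup p) (sr c) - 1) *
        MonoidAlgebra.of (ZMod 2) (DihedralGroup p) h *
        ∑ i ∈ Finset.range (orderOf (sr c)), MonoidAlgebra.of (ZMod 2) (DihedralGroup p) ((sr c) ^ i)
      = 1 + (1 + MonoidAlgebra.of (ZMod 2) (DihedralGroup p) (sr c)) *
          MonoidAlgebra.of (ZMod 2) (DihedralGroup p) h *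
          (1 + MonoidAlgebra.of (ZMod 2) (DihedralGroup p) (sr c)) := by
  rw [orderOf_sr, Finset.sum_range_succ, Finset.sum_range_one, pow_zero, pow_one, map_one,
    sub_eq_add_neg, neg_self]
  noncomm_ring

lemma one_add_sr_sq (c : ZMod p) :
    (1 + MonoidAlgebra.of (ZMod 2) (DihedralGroup p) (sr c)) *
      (1 + MonoidAlgebra.of (ZMod 2) (DihedralGroup p) (sr c)) = 0 := by
  set s := MonoidAlgebra.of (ZMod 2) (DihedralGroup p) (sr c) with hs
  have h2 : s * s = 1 := by
    rw [hs, ← map_mul, sr_mul_sr, sub_self, ← one_def, map_one]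
  rw [show (1 + s) * (1 + s) = 1 + s + s + s * s from by noncomm_ring, h2,
    show (1 : MonoidAlgebra (ZMod 2) (DihedralGroup p)) + s + s + 1
      = (1 + 1) + (s + s) from by abel, add_self, add_self, add_zero]

lemma gen_sq (c : ZMod p) (h : DihedralGroup p) :
    (1 + (MonoidAlgebra.of (ZMod 2) (DihedralGroup p) (sr c) - 1) *
        MonoidAlgebra.of (ZMod 2) (DihedralGroup p) h *
        ∑ i ∈ Finset.range (orderOf (sr c)), MonoidAlgebra.of (ZMod 2) (DihedralGroup p) ((sr c) ^ i)) *
    (1 + (MonoidAlgebra.of (ZMod 2) (DihedralGroup p) (sr c) - 1) *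
        MonoidAlgebra.of (ZMod 2) (DihedralGroup p) h *
        ∑ i ∈ Finset.range (orderOf (sr c)), MonoidAlgebra.of (ZMod 2) (DihedralGroup p) ((sr c) ^ i)) = 1 := by
  rw [gen_expr]
  set t := 1 + MonoidAlgebra.of (ZMod 2) (DihedralGroup p) (sr c) with ht
  set oh := MonoidAlgebra.of (ZMod 2) (DihedralGroup p) h with hoh
  have hx : (t * oh * t) * (t * oh * t) = 0 := by
    rw [show (t * oh * t) * (t * oh * t) = t * oh * (t * t) * oh * t from by noncomm_ring,
      one_add_sr_sq (c := c)]
    simp [ht]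
  rw [show (1 + t * oh * t) * (1 + t * oh * t)
      = 1 + t * oh * t + t * oh * t + (t * oh * t) * (t * oh * t) from by noncomm_ring,
    hx, add_zero, add_assoc, add_self, add_zero]

noncomputable def genU (c : ZMod p) (h : DihedralGroup p) :
    (MonoidAlgebra (ZMod 2) (DihedralGroup p))ˣ :=
  ⟨1 + (MonoidAlgebra.of (ZMod 2) (DihedralGroup p) (sr c) - 1) *
        MonoidAlgebra.of (ZMod 2) (DihedralGroup p) h *
        ∑ i ∈ Finset.range (orderOf (sr c)), MonoidAlgebra.of (ZMod 2) (DihedralGroup p) ((sr c) ^ i),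
   _, gen_sq c h, gen_sq c h⟩

lemma genU_mem (c : ZMod p) (h : DihedralGroup p) : genU c h ∈ bicyclicGroup p :=
  Subgroup.subset_closure ⟨sr c, h, rfl⟩

lemma genU_val (c k : ℤ) :
    ((genU ((c : ZMod p)) (r (k : ZMod p)) : (MonoidAlgebra (ZMod 2) (DihedralGroup p))ˣ) :
      MonoidAlgebra (ZMod 2) (DihedralGroup p))
    = 1 + rh p k + rh p (-k) + sh p (c+k) + sh p (c-k) := by
  show 1 + _ = _
  rw [gen_expr]
  have h1 : (1 + sh p c) * rh p k * (1 + sh p c)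
      = rh p k + rh p (-k) + sh p (c+k) + sh p (c-k) := by
    rw [add_mul, one_mul, sh_mul_rh, add_mul, mul_add, mul_add, mul_one, mul_one,
      rh_mul_sh, sh_mul_sh, show c - (c + k) = -k from by ring]
    abel
  rw [h1]
  abel


lemma uab_eq (k : ℤ) :
    ((genU (((-1:ℤ) : ZMod p)) (r (k : ZMod p)) : (MonoidAlgebra (ZMod 2) (DihedralGroup p))ˣ) :
      MonoidAlgebra (ZMod 2) (DihedralGroup p)) = uab p k := by
  rw [genU_val, uab, show (-1:ℤ)+k = k-1 from by ring]

lemma ub_eq (k : ℤ) :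
    ((genU (((0:ℤ) : ZMod p)) (r (k : ZMod p)) : (MonoidAlgebra (ZMod 2) (DihedralGroup p))ˣ) :
      MonoidAlgebra (ZMod 2) (DihedralGroup p)) = ub p k := by
  rw [genU_val, ub, show (0:ℤ)+k = k from by ring, show (0:ℤ)-k = -k from by ring]

variable (p)
noncomputable def UAu (m : ℕ) : (MonoidAlgebra (ZMod 2) (DihedralGroup p))ˣ :=
  ((List.range m).map (fun k : ℕ => genU (((-1:ℤ) : ZMod p)) (r (((k:ℤ)+1 : ℤ) : ZMod p)))).prod
noncomputable def UBu (m : ℕ) : (MonoidAlgebra (ZMod 2) (DihedralGroup p))ˣ :=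
  ((List.range m).map (fun k : ℕ => genU (((0:ℤ) : ZMod p)) (r (((k:ℤ)+1 : ℤ) : ZMod p)))).prod
variable {p}

lemma UAu_val (m : ℕ) : ((UAu p m : (MonoidAlgebra (ZMod 2) (DihedralGroup p))ˣ) :
    MonoidAlgebra (ZMod 2) (DihedralGroup p)) = AA p m := by
  rw [UAu, ← Units.coeHom_apply, map_list_prod, List.map_map, ← prodA]
  exact congrArg List.prod (List.map_congr_left fun k _ => uab_eq _)

lemma UBu_val (m : ℕ) : rh p 1 * ((UBu p m : (MonoidAlgebra (ZMod 2) (DihedralGroup p))ˣ) :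
    MonoidAlgebra (ZMod 2) (DihedralGroup p)) = EE p m := by
  rw [UBu, ← Units.coeHom_apply, map_list_prod, List.map_map, ← prodE]
  exact congrArg (rh p 1 * ·) (congrArg List.prod (List.map_congr_left fun k _ => ub_eq _))

lemma UAu_mem (m : ℕ) : UAu p m ∈ bicyclicGroup p := by
  apply Subgroup.list_prod_mem
  intro x hx
  obtain ⟨k, -, rfl⟩ := List.mem_map.1 hx
  exact genU_mem _ _

lemma UBu_mem (m : ℕ) : UBu p m ∈ bicyclicGroup p := by
  apply Subgroup.list_prod_mem
  intro x hx
  obtain ⟨k, -, rfl⟩ := List.mem_map.1 hx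
  exact genU_mem _ _

lemma r_one_unit (hodd : Odd p) :
    ∃ U : (MonoidAlgebra (ZMod 2) (DihedralGroup p))ˣ,
      (U : MonoidAlgebra (ZMod 2) (DihedralGroup p)) = rh p 1 ∧ U ∈ bicyclicGroup p := by
  obtain ⟨t, ht⟩ := hodd
  refine ⟨UAu p t * (UBu p t)⁻¹, ?_, mul_mem (UAu_mem t) (inv_mem (UBu_mem t))⟩
  have h1 : ((UAu p t : _ˣ) : MonoidAlgebra (ZMod 2) (DihedralGroup p))
      = rh p 1 * ((UBu p t : _ˣ) : MonoidAlgebra (ZMod 2) (DihedralGroup p)) := by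
    rw [UAu_val, UBu_val, AEeq (by omega)]
  rw [Units.val_mul, h1, mul_assoc, ← Units.val_mul]
  simp


/-- Quotient map killing the rotations. -/
def pr : DihedralGroup p →* Multiplicative (ZMod 2) where
  toFun x := match x with
    | r _ => 1
    | sr _ => Multiplicative.ofAdd 1
  map_one' := rfl
  map_mul' := by rintro (a|a) (b|b) <;> simp <;> decide

@[simp] lemma pr_r (i : ZMod p) : pr (r i) = 1 := rfl
@[simp] lemma pr_sr (i : ZMod p) : pr (sr i) = Multiplicative.ofAdd 1 := rfl

noncomputable def Phi : MonoidAlgebra (ZMod 2) (DihedralGroup p) →+*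
    MonoidAlgebra (ZMod 2) (Multiplicative (ZMod 2)) :=
  MonoidAlgebra.mapDomainRingHom (ZMod 2) (pr (p := p))

lemma Phi_of (x : DihedralGroup p) :
    Phi (MonoidAlgebra.of (ZMod 2) (DihedralGroup p) x)
      = MonoidAlgebra.of (ZMod 2) (Multiplicative (ZMod 2)) (pr x) := by
  show MonoidAlgebra.mapDomain _ _ = _
  simp [MonoidAlgebra.of_apply, Finsupp.mapDomain_single]

lemma Phi_gen (g h : DihedralGroup p) :
    Phi (1 + (MonoidAlgebra.of (ZMod 2) (DihedralGroup p) g - 1) *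
        MonoidAlgebra.of (ZMod 2) (DihedralGroup p) h *
        ∑ i ∈ Finset.range (orderOf g), MonoidAlgebra.of (ZMod 2) (DihedralGroup p) (g ^ i)) = 1 := by
  rw [map_add, map_one, map_mul, map_mul, map_sub, map_one, map_sum, Phi_of, Phi_of]
  simp only [Phi_of, ← map_pow]
  match g with
  | r j => rw [pr_r, map_one]; simp
  | sr j =>
    rw [orderOf_sr]
    set s := MonoidAlgebra.of (ZMod 2) (Multiplicative (ZMod 2)) (pr (sr j : DihedralGroup p)) with hs
    have h2 : s * s = 1 := by
      rw [hs, ← map_mul, ← map_mul, show (sr j : DihedralGroup p) * sr j = 1 from by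
        rw [sr_mul_sr, sub_self, ← DihedralGroup.one_def], map_one, map_one]
    have : ∑ i ∈ Finset.range 2, MonoidAlgebra.of (ZMod 2) (Multiplicative (ZMod 2)) (pr ((sr j : DihedralGroup p) ^ i)) = 1 + s := by
      rw [Finset.sum_range_succ, Finset.sum_range_one, pow_zero, pow_one, map_one, map_one]
    rw [this]
    have : (s - 1) * MonoidAlgebra.of (ZMod 2) (Multiplicative (ZMod 2)) (pr h) * (1 + s) = 0 := by
      have expand : (s - 1) * MonoidAlgebra.of (ZMod 2) (Multiplicative (ZMod 2)) (pr h) * (1 + s)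
          = MonoidAlgebra.of (ZMod 2) (Multiplicative (ZMod 2)) (pr h) * (s * s - 1) := by ring
      rw [expand, h2, sub_self, mul_zero]
    rw [this, add_zero]

lemma mem_B_phi {u : (MonoidAlgebra (ZMod 2) (DihedralGroup p))ˣ}
    (hu : u ∈ bicyclicGroup p) :
    Phi ((u : (MonoidAlgebra (ZMod 2) (DihedralGroup p))ˣ) :
      MonoidAlgebra (ZMod 2) (DihedralGroup p)) = 1 := by
  have key : bicyclicGroup p ≤ (Units.map (Phi (p := p)).toMonoidHom).ker := by
    rw [bicyclicGroup]
    apply Subgroup.closure_le _ |>.2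
    rintro v ⟨g, h, hv⟩
    simp only [SetLike.mem_coe, MonoidHom.mem_ker]
    apply Units.ext
    rw [Units.coe_map, Units.val_one]
    show Phi ((v : (MonoidAlgebra (ZMod 2) (DihedralGroup p))ˣ) :
      MonoidAlgebra (ZMod 2) (DihedralGroup p)) = 1
    rw [hv]
    exact Phi_gen g h
  have := key hu
  rw [MonoidHom.mem_ker] at this
  have := congrArg Units.val this
  rw [Units.coe_map, Units.val_one] at this
  exact this

end S15


open S15 in
theorem stmt15 (p : ℕ) (hp : p.Prime) (hodd : Odd p)
    (g : DihedralGroup p) (u : (MonoidAlgebra (ZMod 2) (DihedralGroup p))ˣ)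
    (hu : (u : MonoidAlgebra (ZMod 2) (DihedralGroup p)) =
      MonoidAlgebra.of (ZMod 2) (DihedralGroup p) g) :
    u ∈ bicyclicGroup p ↔ g ∈ Subgroup.zpowers (DihedralGroup.r 1 : DihedralGroup p) := by
  haveI : NeZero p := ⟨hp.ne_zero⟩
  constructor
  · intro hB
    have h1 : Phi (MonoidAlgebra.of (ZMod 2) (DihedralGroup p) g) = 1 := by
      rw [← hu]; exact mem_B_phi hB
    rw [Phi_of] at h1
    have h2 : pr g = 1 :=
      MonoidAlgebra.of_injective (by rw [map_one]; exact h1)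
    rcases g with j | j
    · exact Subgroup.mem_zpowers_iff.2 ⟨(j.val : ℤ), by
        rw [zpow_natCast, DihedralGroup.r_one_pow]
        exact congrArg DihedralGroup.r (ZMod.natCast_rightInverse j)⟩
    · rw [pr_sr] at h2
      exact absurd h2 (by decide)
  · intro hg
    obtain ⟨U, hUval, hUB⟩ := r_one_unit hodd
    obtain ⟨n, hn⟩ := mem_powers_iff_mem_zpowers.2 hg
    have hn' : (DihedralGroup.r 1 : DihedralGroup p) ^ n = g := hn
    have hrh : rh p 1 = MonoidAlgebra.of (ZMod 2) (DihedralGroup p) (DihedralGroup.r 1) := by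
      norm_num
    have : u = U ^ n := by
      apply Units.ext
      rw [Units.val_pow_eq_pow_val, hUval, hrh, ← map_pow, hn', hu]
    rw [this]
    exact pow_mem hUB n
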